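/- If P₀ —τ→ P₁ —τ→ ⋯ —τ→ Pₙ is a sequence of internal actions of π-processes with Pₙ = P₀ (absolute equality), then P₀ = P₁ = ⋯ = Pₙ, i.e., all processes along the sequence are absolutely equal. -/

import Mathlib

set_option linter.unusedVariables false

/-! Core formalization of the π-calculus with name dichotomy.
Names are natural numbers; name variables are natural numbers (kept disjoint
via the sum-like type `NV`). -/

abbrev Name := ℕ

/-- Names and name variables. -/
inductive NV : Type
  | nm : Name → NV
  | vr : ℕ → NV
  deriving DecidableEq

/-- π-terms.  Input and output choices have a finite index set `Fin k`. -/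
inductive Term : Type
  | nil : Term
  | inp : NV → ℕ → (k : ℕ) → (Fin k → Term) → Term          -- Σ_{i∈I} n(x).T_i
  | out : NV → (k : ℕ) → (Fin k → NV) → (Fin k → Term) → Term -- Σ_{i∈I} n̄ m_i.T_i
  | par : Term → Term → Term
  | res : Name → Term → Term
  | mat : NV → NV → Term → Term
  | mis : NV → NV → Term → Term
  | repInp : NV → ℕ → Term → Term                             -- !n(x).T
  | repOut : NV → NV → Term → Term                            -- !n̄m.T

namespace NV

/-- Apply a map on variables. -/
def sub (σ : ℕ → NV) : NV → NV
  | nm a => nm a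
  | vr x => σ x

/-- Apply a map on names. -/
def ren (α : Name → Name) : NV → NV
  | nm a => nm (α a)
  | vr x => vr x

def vars : NV → Set ℕ
  | nm _ => ∅
  | vr x => {x}

def names : NV → Set Name
  | nm a => {a}
  | vr _ => ∅

end NV

namespace Term

/-- Apply a substitution (a map from name variables to names-or-variables),
    not substituting bound occurrences. -/
def applyVar (σ : ℕ → NV) : Term → Term
  | nil => nil
  | inp n x k Ts => inp (n.sub σ) x k (fun i => (Ts i).applyVar (Function.update σ x (NV.vr x)))
  | out n k ms Ts => out (n.sub σ) k (fun i => (ms i).sub σ) (fun i => (Ts i).applyVar σ)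
  | par S T => par (S.applyVar σ) (T.applyVar σ)
  | res c T => res c (T.applyVar σ)
  | mat p q T => mat (p.sub σ) (q.sub σ) (T.applyVar σ)
  | mis p q T => mis (p.sub σ) (q.sub σ) (T.applyVar σ)
  | repInp n x T => repInp (n.sub σ) x (T.applyVar (Function.update σ x (NV.vr x)))
  | repOut n m T => repOut (n.sub σ) (m.sub σ) (T.applyVar σ)

/-- Substitute the single name `c` for the name variable `x`: `T{c/x}`. -/
def subst1 (x : ℕ) (c : Name) (T : Term) : Term :=
  T.applyVar (fun y => if y = x then NV.nm c else NV.vr y)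

/-- Apply an assignment (a total map from name variables to names). -/
def assign (ρ : ℕ → Name) (T : Term) : Term :=
  T.applyVar (fun x => NV.nm (ρ x))

/-- Apply a renaming to all names of a term. -/
def applyName (α : Name → Name) : Term → Term
  | nil => nil
  | inp n x k Ts => inp (n.ren α) x k (fun i => (Ts i).applyName α)
  | out n k ms Ts => out (n.ren α) k (fun i => (ms i).ren α) (fun i => (Ts i).applyName α)
  | par S T => par (S.applyName α) (T.applyName α)
  | res c T => res (α c) (T.applyName α)
  | mat p q T => mat (p.ren α) (q.ren α) (T.applyName α)
  | mis p q T => mis (p.ren α) (q.ren α) (T.applyName α)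
  | repInp n x T => repInp (n.ren α) x (T.applyName α)
  | repOut n m T => repOut (n.ren α) (m.ren α) (T.applyName α)

/-- Free name variables. -/
def fvar : Term → Set ℕ
  | nil => ∅
  | inp n x k Ts => n.vars ∪ ((⋃ i, (Ts i).fvar) \ {x})
  | out n k ms Ts => n.vars ∪ (⋃ i, (ms i).vars ∪ (Ts i).fvar)
  | par S T => S.fvar ∪ T.fvar
  | res _ T => T.fvar
  | mat p q T => p.vars ∪ q.vars ∪ T.fvar
  | mis p q T => p.vars ∪ q.vars ∪ T.fvar
  | repInp n x T => n.vars ∪ (T.fvar \ {x})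
  | repOut n m T => n.vars ∪ m.vars ∪ T.fvar

/-- Global (non-local) names. -/
def gname : Term → Set Name
  | nil => ∅
  | inp n _ k Ts => n.names ∪ (⋃ i, (Ts i).gname)
  | out n k ms Ts => n.names ∪ (⋃ i, (ms i).names ∪ (Ts i).gname)
  | par S T => S.gname ∪ T.gname
  | res c T => T.gname \ {c}
  | mat p q T => p.names ∪ q.names ∪ T.gname
  | mis p q T => p.names ∪ q.names ∪ T.gname
  | repInp n _ T => n.names ∪ T.gname
  | repOut n m T => n.names ∪ m.names ∪ T.gname

end Term

/-- A π-process is a closed π-term. -/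
def Closed (P : Term) : Prop := P.fvar = ∅

def IsProc (P : Term) : Prop := Closed P

/-- Labels (external actions). -/
inductive Label : Type
  | inp : Name → Name → Label      -- ab
  | out : Name → Name → Label      -- āb
  | bout : Name → Name → Label     -- ā(c)
  deriving DecidableEq

def Label.names : Label → Set Name
  | .inp a b => {a, b}
  | .out a b => {a, b}
  | .bout a c => {a, c}

def Label.ren (α : Name → Name) : Label → Label
  | .inp a b => .inp (α a) (α b)
  | .out a b => .out (α a) (α b)
  | .bout a c => .bout (α a) (α c)

/-- Actions: internal action τ or a label. -/
inductive Act : Type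
  | tau : Act
  | lab : Label → Act

def Act.names : Act → Set Name
  | .tau => ∅
  | .lab ℓ => ℓ.names

def Act.ren (α : Name → Name) : Act → Act
  | .tau => .tau
  | .lab ℓ => .lab (ℓ.ren α)

/-- The labelled transition system of the π-calculus. -/
inductive Step : Term → Act → Term → Prop
  | inp {a : Name} {x : ℕ} {k : ℕ} {Ts : Fin k → Term} (i : Fin k) (c : Name) :
      Step (.inp (.nm a) x k Ts) (.lab (.inp a c)) ((Ts i).subst1 x c)
  | out {a : Name} {k : ℕ} {ms : Fin k → NV} {Ts : Fin k → Term} (i : Fin k) {c : Name}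
      (h : ms i = .nm c) :
      Step (.out (.nm a) k ms Ts) (.lab (.out a c)) (Ts i)
  | parR {S T T' : Term} {μ : Act} :
      Step T μ T' → Step (.par S T) μ (.par S T')
  | parL {S S' T : Term} {μ : Act} :
      Step S μ S' → Step (.par S T) μ (.par S' T)
  | commL {S S' T T' : Term} {a b : Name} :
      Step S (.lab (.inp a b)) S' → Step T (.lab (.out a b)) T' →
      Step (.par S T) .tau (.par S' T')
  | commR {S S' T T' : Term} {a b : Name} :
      Step S (.lab (.out a b)) S' → Step T (.lab (.inp a b)) T' →
      Step (.par S T) .tau (.par S' T')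
  | closeL {S S' T T' : Term} {a c : Name} :
      Step S (.lab (.inp a c)) S' → Step T (.lab (.bout a c)) T' →
      Step (.par S T) .tau (.res c (.par S' T'))
  | closeR {S S' T T' : Term} {a c : Name} :
      Step S (.lab (.bout a c)) S' → Step T (.lab (.inp a c)) T' →
      Step (.par S T) .tau (.res c (.par S' T'))
  | open_ {T T' : Term} {a c : Name} :
      Step T (.lab (.out a c)) T' → Step (.res c T) (.lab (.bout a c)) T'
  | resStep {T T' : Term} {μ : Act} {c : Name} :
      Step T μ T' → c ∉ μ.names → Step (.res c T) μ (.res c T')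
  | matStep {T T' : Term} {μ : Act} {a : Name} :
      Step T μ T' → Step (.mat (.nm a) (.nm a) T) μ T'
  | misStep {T T' : Term} {μ : Act} {a b : Name} :
      a ≠ b → Step T μ T' → Step (.mis (.nm a) (.nm b) T) μ T'
  | repOutStep {a b : Name} {T : Term} :
      Step (.repOut (.nm a) (.nm b) T) (.lab (.out a b)) (.par T (.repOut (.nm a) (.nm b) T))
  | repInpStep {a : Name} {x : ℕ} {T : Term} (b : Name) :
      Step (.repInp (.nm a) x T) (.lab (.inp a b)) (.par (T.subst1 x b) (.repInp (.nm a) x T))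

/-- Internal action. -/
def Tau (P Q : Term) : Prop := Step P .tau Q

/-- `P ⟹ Q` : reflexive and transitive closure of τ. -/
def WeakTau : Term → Term → Prop := Relation.ReflTransGen Tau

/-- `P ⇓` : observability. -/
def Obs (P : Term) : Prop := ∃ P' ℓ P'', WeakTau P P' ∧ Step P' (.lab ℓ) P''

abbrev PRel : Type := Term → Term → Prop

def OnProc (R : PRel) : Prop := ∀ P Q, R P Q → IsProc P ∧ IsProc Q

def ReflProc (R : PRel) : Prop := ∀ P, IsProc P → R P P

def Equipollent (R : PRel) : Prop := ∀ P Q, R P Q → (Obs P ↔ Obs Q)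

def Extensional (R : PRel) : Prop :=
  (∀ L M P Q, R L M → R P Q → R (.par L P) (.par M Q)) ∧
  (∀ P Q c, R P Q → R (.res c P) (.res c Q))

/-- An infinite τ-sequence. -/
def TauSeq (f : ℕ → Term) : Prop := ∀ n, Tau (f n) (f (n + 1))

/-- `P —τ→⟹ P'`. -/
def TauWeak (P P' : Term) : Prop := ∃ P₀, Tau P P₀ ∧ WeakTau P₀ P'

def Codivergent (R : PRel) : Prop := ∀ P Q, R P Q →
  ((∀ f : ℕ → Term, f 0 = Q → TauSeq f →
      ∃ k, 1 ≤ k ∧ ∃ P', TauWeak P P' ∧ R P' (f k)) ∧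
   (∀ f : ℕ → Term, f 0 = P → TauSeq f →
      ∃ k, 1 ≤ k ∧ ∃ Q', TauWeak Q Q' ∧ R Q' (f k)))

/-- Branching-style bisimulation. -/
def Bisim (R : PRel) : Prop := ∀ P Q, R P Q →
  ((∀ Q', Tau Q Q' →
      (∃ P', WeakTau P P' ∧ R P' Q ∧ R P' Q') ∨
      (∃ P'' P', WeakTau P P'' ∧ R P'' Q ∧ Tau P'' P' ∧ R P' Q')) ∧
   (∀ P', Tau P P' →
      (∃ Q', WeakTau Q Q' ∧ R P Q' ∧ R P' Q') ∨
      (∃ Q'' Q', WeakTau Q Q'' ∧ R P Q'' ∧ Tau Q'' Q' ∧ R P' Q')))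

/-- A relation qualifying for the absolute equality. -/
def GoodAbs (R : PRel) : Prop :=
  OnProc R ∧ ReflProc R ∧ Equipollent R ∧ Extensional R ∧ Codivergent R ∧ Bisim R

/-- The absolute equality: the largest reflexive, equipollent, extensional,
codivergent bisimulation on π-processes. -/
def AbsEq (P Q : Term) : Prop := ∃ R : PRel, GoodAbs R ∧ R P Q

namespace Inert

open Relation Term

/-! ### Free-variable lemmas -/

lemma mem_vars_sub {σ : ℕ → NV} {n : NV} {z : ℕ} (h : z ∈ (n.sub σ).vars) :
    ∃ x ∈ n.vars, z ∈ (σ x).vars := by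
  cases n with
  | nm a => simp [NV.sub, NV.vars] at h
  | vr y => exact ⟨y, by simp [NV.vars], h⟩

lemma fvar_applyVar (T : Term) : ∀ (σ : ℕ → NV) (z : ℕ), z ∈ (T.applyVar σ).fvar →
    ∃ x ∈ T.fvar, z ∈ (σ x).vars := by
  induction T with
  | nil => intro σ z hz; simp [Term.applyVar, Term.fvar] at hz
  | inp n x k Ts ih =>
    intro σ z hz
    simp only [Term.applyVar, Term.fvar, Set.mem_union, Set.mem_diff, Set.mem_iUnion,
      Set.mem_singleton_iff] at hz ⊢
    rcases hz with hz | ⟨⟨i, hzi⟩, hzx⟩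
    · obtain ⟨y, hy, hzy⟩ := mem_vars_sub hz
      exact ⟨y, Or.inl hy, hzy⟩
    · obtain ⟨y, hy, hzy⟩ := ih i _ z hzi
      by_cases hyx : y = x
      · subst hyx; rw [Function.update_self] at hzy
        simp [NV.vars] at hzy; exact absurd hzy hzx
      · rw [Function.update_of_ne hyx] at hzy
        exact ⟨y, Or.inr ⟨⟨i, hy⟩, hyx⟩, hzy⟩
  | out n k ms Ts ih =>
    intro σ z hz
    simp only [Term.applyVar, Term.fvar, Set.mem_union, Set.mem_iUnion] at hz ⊢
    rcases hz with hz | ⟨i, hz | hz⟩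
    · obtain ⟨y, hy, hzy⟩ := mem_vars_sub hz
      exact ⟨y, Or.inl hy, hzy⟩
    · obtain ⟨y, hy, hzy⟩ := mem_vars_sub hz
      exact ⟨y, Or.inr ⟨i, Or.inl hy⟩, hzy⟩
    · obtain ⟨y, hy, hzy⟩ := ih i σ z hz
      exact ⟨y, Or.inr ⟨i, Or.inr hy⟩, hzy⟩
  | par S T ihS ihT =>
    intro σ z hz
    simp only [Term.applyVar, Term.fvar, Set.mem_union] at hz ⊢
    rcases hz with hz | hz
    · obtain ⟨y, hy, hzy⟩ := ihS σ z hz; exact ⟨y, Or.inl hy, hzy⟩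
    · obtain ⟨y, hy, hzy⟩ := ihT σ z hz; exact ⟨y, Or.inr hy, hzy⟩
  | res c T ih =>
    intro σ z hz
    simp only [Term.applyVar, Term.fvar] at hz ⊢
    exact ih σ z hz
  | mat p q T ih =>
    intro σ z hz
    simp only [Term.applyVar, Term.fvar, Set.mem_union] at hz ⊢
    rcases hz with (hz | hz) | hz
    · obtain ⟨y, hy, hzy⟩ := mem_vars_sub hz; exact ⟨y, Or.inl (Or.inl hy), hzy⟩
    · obtain ⟨y, hy, hzy⟩ := mem_vars_sub hz; exact ⟨y, Or.inl (Or.inr hy), hzy⟩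
    · obtain ⟨y, hy, hzy⟩ := ih σ z hz; exact ⟨y, Or.inr hy, hzy⟩
  | mis p q T ih =>
    intro σ z hz
    simp only [Term.applyVar, Term.fvar, Set.mem_union] at hz ⊢
    rcases hz with (hz | hz) | hz
    · obtain ⟨y, hy, hzy⟩ := mem_vars_sub hz; exact ⟨y, Or.inl (Or.inl hy), hzy⟩
    · obtain ⟨y, hy, hzy⟩ := mem_vars_sub hz; exact ⟨y, Or.inl (Or.inr hy), hzy⟩
    · obtain ⟨y, hy, hzy⟩ := ih σ z hz; exact ⟨y, Or.inr hy, hzy⟩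
  | repInp n x T ih =>
    intro σ z hz
    simp only [Term.applyVar, Term.fvar, Set.mem_union, Set.mem_diff,
      Set.mem_singleton_iff] at hz ⊢
    rcases hz with hz | ⟨hz, hzx⟩
    · obtain ⟨y, hy, hzy⟩ := mem_vars_sub hz
      exact ⟨y, Or.inl hy, hzy⟩
    · obtain ⟨y, hy, hzy⟩ := ih _ z hz
      by_cases hyx : y = x
      · subst hyx; rw [Function.update_self] at hzy
        simp [NV.vars] at hzy; exact absurd hzy hzx
      · rw [Function.update_of_ne hyx] at hzy
        exact ⟨y, Or.inr ⟨hy, hyx⟩, hzy⟩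
  | repOut n m T ih =>
    intro σ z hz
    simp only [Term.applyVar, Term.fvar, Set.mem_union] at hz ⊢
    rcases hz with (hz | hz) | hz
    · obtain ⟨y, hy, hzy⟩ := mem_vars_sub hz; exact ⟨y, Or.inl (Or.inl hy), hzy⟩
    · obtain ⟨y, hy, hzy⟩ := mem_vars_sub hz; exact ⟨y, Or.inl (Or.inr hy), hzy⟩
    · obtain ⟨y, hy, hzy⟩ := ih σ z hz; exact ⟨y, Or.inr hy, hzy⟩

lemma fvar_subst1 {T : Term} {x : ℕ} {c : Name} {z : ℕ}
    (h : z ∈ (T.subst1 x c).fvar) : z ∈ T.fvar ∧ z ≠ x := by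
  obtain ⟨y, hy, hzy⟩ := fvar_applyVar T _ z h
  by_cases hyx : y = x
  · subst hyx; simp [NV.vars] at hzy
  · simp only [if_neg hyx, NV.vars, Set.mem_singleton_iff] at hzy
    subst hzy; exact ⟨hy, hyx⟩

lemma step_fvar {P P' : Term} {μ : Act} (h : Step P μ P') :
    ∀ z ∈ P'.fvar, z ∈ P.fvar := by
  induction h with
  | inp i c =>
    intro z hz
    obtain ⟨hz, hzx⟩ := fvar_subst1 hz
    simp only [Term.fvar, Set.mem_union, Set.mem_diff, Set.mem_iUnion,
      Set.mem_singleton_iff]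
    exact Or.inr ⟨⟨i, hz⟩, hzx⟩
  | out i hms =>
    intro z hz
    simp only [Term.fvar, Set.mem_union, Set.mem_iUnion]
    exact Or.inr ⟨i, Or.inr hz⟩
  | parR _ ih =>
    intro z hz
    simp only [Term.fvar, Set.mem_union] at hz ⊢
    exact hz.imp id (ih z)
  | parL _ ih =>
    intro z hz
    simp only [Term.fvar, Set.mem_union] at hz ⊢
    exact hz.imp (ih z) id
  | commL h1 h2 ih1 ih2 =>
    intro z hz
    simp only [Term.fvar, Set.mem_union] at hz ⊢
    exact hz.imp (ih1 z) (ih2 z)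
  | commR h1 h2 ih1 ih2 =>
    intro z hz
    simp only [Term.fvar, Set.mem_union] at hz ⊢
    exact hz.imp (ih1 z) (ih2 z)
  | closeL h1 h2 ih1 ih2 =>
    intro z hz
    simp only [Term.fvar, Set.mem_union] at hz ⊢
    exact hz.imp (ih1 z) (ih2 z)
  | closeR h1 h2 ih1 ih2 =>
    intro z hz
    simp only [Term.fvar, Set.mem_union] at hz ⊢
    exact hz.imp (ih1 z) (ih2 z)
  | open_ _ ih =>
    intro z hz
    simp only [Term.fvar]
    exact ih z hz
  | resStep _ _ ih =>
    intro z hz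
    simp only [Term.fvar] at hz ⊢
    exact ih z hz
  | matStep _ ih =>
    intro z hz
    simp only [Term.fvar, Set.mem_union]
    exact Or.inr (ih z hz)
  | misStep _ _ ih =>
    intro z hz
    simp only [Term.fvar, Set.mem_union]
    exact Or.inr (ih z hz)
  | repOutStep =>
    intro z hz
    simp only [Term.fvar, Set.mem_union, NV.vars] at hz ⊢
    simp at hz
    simp [hz]
  | repInpStep b =>
    intro z hz
    simp only [Term.fvar, Set.mem_union, Set.mem_diff, Set.mem_singleton_iff] at hz ⊢
    rcases hz with hz | hz
    · obtain ⟨h1, h2⟩ := fvar_subst1 hz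
      exact Or.inr ⟨h1, h2⟩
    · exact hz

end Inert
namespace Inert

/-! ### Basic lemmas about τ-moves, observability, closedness -/

lemma closed_step {P P' : Term} {μ : Act} (h : Step P μ P') (hc : Closed P) : Closed P' := by
  rw [Closed, Set.eq_empty_iff_forall_notMem]
  intro z hz
  have := step_fvar h z hz
  rw [Closed, Set.eq_empty_iff_forall_notMem] at hc
  exact hc z this

lemma closed_tau {P P' : Term} (h : Tau P P') (hc : Closed P) : Closed P' :=
  closed_step h hc

lemma closed_weak {P P' : Term} (h : WeakTau P P') (hc : Closed P) : Closed P' := by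
  induction h with
  | refl => exact hc
  | tail _ h2 ih => exact closed_tau h2 ih

lemma weak_trans {A B C : Term} (h1 : WeakTau A B) (h2 : WeakTau B C) : WeakTau A C :=
  Relation.ReflTransGen.trans h1 h2

lemma tauweak_weak {A B : Term} (h : TauWeak A B) : WeakTau A B := by
  obtain ⟨C, h1, h2⟩ := h
  exact Relation.ReflTransGen.head h1 h2

lemma weak_tauweak {A B C : Term} (h1 : WeakTau A B) (h2 : TauWeak B C) : TauWeak A C := by
  rcases Relation.ReflTransGen.cases_head h1 with rfl | ⟨D, hD, hDC⟩
  · exact h2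
  · exact ⟨D, hD, weak_trans hDC (tauweak_weak h2)⟩

lemma tauweak_weakright {A B C : Term} (h1 : TauWeak A B) (h2 : WeakTau B C) : TauWeak A C := by
  obtain ⟨D, hD, hDB⟩ := h1
  exact ⟨D, hD, weak_trans hDB h2⟩

lemma weak_obs {P Q : Term} (h : WeakTau P Q) (ho : Obs Q) : Obs P := by
  obtain ⟨P', ℓ, P'', w, s⟩ := ho
  exact ⟨P', ℓ, P'', weak_trans h w, s⟩

lemma weak_parL {L L' P : Term} (h : WeakTau L L') : WeakTau (.par L P) (.par L' P) := by
  induction h with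
  | refl => exact Relation.ReflTransGen.refl
  | tail _ h2 ih => exact Relation.ReflTransGen.tail ih (Step.parL h2)

lemma weak_parR {L P P' : Term} (h : WeakTau P P') : WeakTau (.par L P) (.par L P') := by
  induction h with
  | refl => exact Relation.ReflTransGen.refl
  | tail _ h2 ih => exact Relation.ReflTransGen.tail ih (Step.parR h2)

lemma weak_res {P P' : Term} (c : Name) (h : WeakTau P P') :
    WeakTau (.res c P) (.res c P') := by
  induction h with
  | refl => exact Relation.ReflTransGen.refl
  | tail _ h2 ih =>
    exact Relation.ReflTransGen.tail ih (Step.resStep h2 (by simp [Act.names]))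

lemma closed_par {L P : Term} (hL : Closed L) (hP : Closed P) : Closed (.par L P) := by
  simp only [Closed, Term.fvar] at *
  rw [hL, hP]; simp

lemma closed_res {P : Term} (c : Name) (hP : Closed P) : Closed (.res c P) := hP

lemma tauseq_weak {g : ℕ → Term} (hg : TauSeq g) : ∀ i j, i ≤ j → WeakTau (g i) (g j) := by
  intro i j hij
  induction j, hij using Nat.le_induction with
  | base => exact Relation.ReflTransGen.refl
  | succ j hij ih => exact Relation.ReflTransGen.tail ih (hg j)

lemma tauseq_closed {g : ℕ → Term} (hg : TauSeq g) (h0 : Closed (g 0)) :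
    ∀ i, Closed (g i) := by
  intro i; exact closed_weak (tauseq_weak hg 0 i (Nat.zero_le i)) h0

/-! ### Simulation of weak moves (STAR) -/

lemma star {R : PRel} (hB : Bisim R) {A B B' : Term} (hR : R A B) (h : WeakTau B B') :
    ∃ A', WeakTau A A' ∧ R A' B' := by
  induction h with
  | refl => exact ⟨A, Relation.ReflTransGen.refl, hR⟩
  | @tail B₁ B' h1 h2 ih =>
    obtain ⟨A₁, w₁, r₁⟩ := ih
    rcases (hB A₁ B₁ r₁).1 B' h2 with ⟨A', w, _, r'⟩ | ⟨A'', A', w, _, t, r'⟩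
    · exact ⟨A', weak_trans w₁ w, r'⟩
    · exact ⟨A', weak_trans w₁ (Relation.ReflTransGen.tail w t), r'⟩

/-! ### The symmetric chain closure of a good relation -/

def Er (R : PRel) : PRel := fun A B => R A B ∨ R B A

def Rstar (R : PRel) : PRel := Relation.TransGen (Er R)

lemma er_symm {R : PRel} {A B : Term} (h : Er R A B) : Er R B A := h.symm

lemma rstar_symm {R : PRel} {A B : Term} (h : Rstar R A B) : Rstar R B A := by
  induction h with
  | single h => exact Relation.TransGen.single (er_symm h)
  | tail _ h2 ih => exact Relation.TransGen.head (er_symm h2) ih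

lemma rstar_single {R : PRel} {A B : Term} (h : R A B) : Rstar R A B :=
  Relation.TransGen.single (Or.inl h)

lemma rstar_head {R : PRel} {A B C : Term} (h : R A B) (h2 : Rstar R B C) : Rstar R A C :=
  Relation.TransGen.head (Or.inl h) h2

lemma rstar_trans {R : PRel} {A B C : Term} (h1 : Rstar R A B) (h2 : Rstar R B C) :
    Rstar R A C := Relation.TransGen.trans h1 h2

lemma bisimE {R : PRel} (hB : Bisim R) : Bisim (Er R) := by
  intro P Q h
  constructor
  · intro Q' hQ'
    rcases h with h | h
    · rcases (hB P Q h).1 Q' hQ' with ⟨P', w, r1, r2⟩ | ⟨P'', P', w, r1, t, r2⟩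
      · exact Or.inl ⟨P', w, Or.inl r1, Or.inl r2⟩
      · exact Or.inr ⟨P'', P', w, Or.inl r1, t, Or.inl r2⟩
    · rcases (hB Q P h).2 Q' hQ' with ⟨P', w, r1, r2⟩ | ⟨P'', P', w, r1, t, r2⟩
      · exact Or.inl ⟨P', w, Or.inr r1, Or.inr r2⟩
      · exact Or.inr ⟨P'', P', w, Or.inr r1, t, Or.inr r2⟩
  · intro P' hP'
    rcases h with h | h
    · rcases (hB P Q h).2 P' hP' with ⟨Q', w, r1, r2⟩ | ⟨Q'', Q', w, r1, t, r2⟩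
      · exact Or.inl ⟨Q', w, Or.inl r1, Or.inl r2⟩
      · exact Or.inr ⟨Q'', Q', w, Or.inl r1, t, Or.inl r2⟩
    · rcases (hB Q P h).1 P' hP' with ⟨Q', w, r1, r2⟩ | ⟨Q'', Q', w, r1, t, r2⟩
      · exact Or.inl ⟨Q', w, Or.inr r1, Or.inr r2⟩
      · exact Or.inr ⟨Q'', Q', w, Or.inr r1, t, Or.inr r2⟩

lemma rstar_clause1 {R : PRel} (hB : Bisim R) :
    ∀ X Y, Rstar R X Y → ∀ Y', Tau Y Y' →
      (∃ X', WeakTau X X' ∧ Rstar R X' Y ∧ Rstar R X' Y') ∨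
      (∃ X'' X', WeakTau X X'' ∧ Rstar R X'' Y ∧ Tau X'' X' ∧ Rstar R X' Y') := by
  intro X Y h
  induction h using Relation.TransGen.head_induction_on with
  | single h =>
    intro Y' hY'
    rcases (bisimE hB _ _ h).1 Y' hY' with ⟨X', w, r1, r2⟩ | ⟨X'', X', w, r1, t, r2⟩
    · exact Or.inl ⟨X', w, Relation.TransGen.single r1, Relation.TransGen.single r2⟩
    · exact Or.inr ⟨X'', X', w, Relation.TransGen.single r1, t, Relation.TransGen.single r2⟩
  | @head X Z hXZ hZY ih =>
    intro Y' hY'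
    rcases ih Y' hY' with ⟨Z₁, w, r1, r2⟩ | ⟨Z₂, Z₁, w, r1, t, r2⟩
    · obtain ⟨X₁, wX, e₁⟩ := star (bisimE hB) hXZ w
      exact Or.inl ⟨X₁, wX, Relation.TransGen.head e₁ r1, Relation.TransGen.head e₁ r2⟩
    · obtain ⟨X₂, wX, e₂⟩ := star (bisimE hB) hXZ w
      rcases (bisimE hB _ _ e₂).1 Z₁ t with ⟨X₃, w₃, e3a, e3b⟩ | ⟨X₄, X₃, w₄, e4a, t4, e3b⟩
      · exact Or.inl ⟨X₃, weak_trans wX w₃,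
          Relation.TransGen.head e3a r1, Relation.TransGen.head e3b r2⟩
      · exact Or.inr ⟨X₄, X₃, weak_trans wX w₄,
          Relation.TransGen.head e4a r1, t4, Relation.TransGen.head e3b r2⟩

lemma bisim_rstar {R : PRel} (hB : Bisim R) : Bisim (Rstar R) := by
  intro P Q h
  constructor
  · exact rstar_clause1 hB P Q h
  · intro P' hP'
    rcases rstar_clause1 hB Q P (rstar_symm h) P' hP' with
      ⟨Q₁, w, r1, r2⟩ | ⟨Q₂, Q₁, w, r1, t, r2⟩
    · exact Or.inl ⟨Q₁, w, rstar_symm r1, rstar_symm r2⟩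
    · exact Or.inr ⟨Q₂, Q₁, w, rstar_symm r1, t, rstar_symm r2⟩

lemma rstar_star {R : PRel} (hB : Bisim R) {A B B' : Term} (hR : Rstar R A B)
    (h : WeakTau B B') : ∃ A', WeakTau A A' ∧ Rstar R A' B' :=
  star (bisim_rstar hB) hR h

end Inert
namespace Inert

/-! ### Remaining properties of `Rstar` (except codivergence) -/

lemma rstar_onproc {R : PRel} (hOn : OnProc R) : OnProc (Rstar R) := by
  intro P Q h
  induction h using Relation.TransGen.head_induction_on with
  | single h => rcases h with h | h
                · exact hOn _ _ h
                · exact ⟨(hOn _ _ h).2, (hOn _ _ h).1⟩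
  | @head P Z hPZ _ ih =>
    refine ⟨?_, ih.2⟩
    rcases hPZ with h | h
    · exact (hOn _ _ h).1
    · exact (hOn _ _ h).2

lemma rstar_refl {R : PRel} (hRefl : ReflProc R) : ReflProc (Rstar R) := fun P hP =>
  rstar_single (hRefl P hP)

lemma rstar_equip {R : PRel} (hEq : Equipollent R) : Equipollent (Rstar R) := by
  intro P Q h
  induction h using Relation.TransGen.head_induction_on with
  | single h => rcases h with h | h
                · exact hEq _ _ h
                · exact (hEq _ _ h).symm
  | @head P Z hPZ _ ih =>
    refine Iff.trans ?_ ih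
    rcases hPZ with h | h
    · exact hEq _ _ h
    · exact (hEq _ _ h).symm

lemma rstar_par_left {R : PRel} (hOn : OnProc R) (hRefl : ReflProc R) (hExt : Extensional R)
    {L M : Term} (h : Rstar R L M) {P : Term} (hP : IsProc P) :
    Rstar R (.par L P) (.par M P) := by
  induction h with
  | single h =>
    rcases h with h | h
    · exact rstar_single (hExt.1 _ _ _ _ h (hRefl P hP))
    · exact Relation.TransGen.single (Or.inr (hExt.1 _ _ _ _ h (hRefl P hP)))
  | tail _ h2 ih =>
    refine Relation.TransGen.tail ih ?_
    rcases h2 with h | h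
    · exact Or.inl (hExt.1 _ _ _ _ h (hRefl P hP))
    · exact Or.inr (hExt.1 _ _ _ _ h (hRefl P hP))

lemma rstar_par_right {R : PRel} (hOn : OnProc R) (hRefl : ReflProc R) (hExt : Extensional R)
    {P Q : Term} (h : Rstar R P Q) {M : Term} (hM : IsProc M) :
    Rstar R (.par M P) (.par M Q) := by
  induction h with
  | single h =>
    rcases h with h | h
    · exact rstar_single (hExt.1 _ _ _ _ (hRefl M hM) h)
    · exact Relation.TransGen.single (Or.inr (hExt.1 _ _ _ _ (hRefl M hM) h))
  | tail _ h2 ih =>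
    refine Relation.TransGen.tail ih ?_
    rcases h2 with h | h
    · exact Or.inl (hExt.1 _ _ _ _ (hRefl M hM) h)
    · exact Or.inr (hExt.1 _ _ _ _ (hRefl M hM) h)

lemma rstar_ext {R : PRel} (hOn : OnProc R) (hRefl : ReflProc R) (hExt : Extensional R) :
    Extensional (Rstar R) := by
  constructor
  · intro L M P Q hLM hPQ
    have hP : IsProc P := (rstar_onproc hOn _ _ hPQ).1
    have hM : IsProc M := (rstar_onproc hOn _ _ hLM).2
    exact rstar_trans (rstar_par_left hOn hRefl hExt hLM hP)
      (rstar_par_right hOn hRefl hExt hPQ hM)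
  · intro P Q c h
    induction h with
    | single h =>
      rcases h with h | h
      · exact rstar_single (hExt.2 _ _ c h)
      · exact Relation.TransGen.single (Or.inr (hExt.2 _ _ c h))
    | tail _ h2 ih =>
      refine Relation.TransGen.tail ih ?_
      rcases h2 with h | h
      · exact Or.inl (hExt.2 _ _ c h)
      · exact Or.inr (hExt.2 _ _ c h)

end Inert
namespace Inert

/-! ### Finite τ-paths and concatenation into infinite τ-sequences -/

lemma weak_path {A B : Term} (h : WeakTau A B) :
    ∃ q, ∃ p : ℕ → Term, p 0 = A ∧ p q = B ∧ ∀ l < q, Tau (p l) (p (l+1)) := by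
  induction h with
  | refl => exact ⟨0, fun _ => A, rfl, rfl, by omega⟩
  | @tail B₁ B h1 h2 ih =>
    obtain ⟨q, p, hp0, hpe, hpath⟩ := ih
    refine ⟨q + 1, fun l => if l = q + 1 then B else p l, by simp [hp0], by simp, ?_⟩
    intro l hl
    rcases Nat.lt_succ_iff_lt_or_eq.mp hl with hl | hl
    · have h1 : l ≠ q + 1 := by omega
      have h2 : l + 1 ≠ q + 1 := by omega
      simp only [if_neg h1, if_neg h2]
      exact hpath l hl
    · subst hl
      have h1 : l ≠ l + 1 := by omega
      simp only [if_neg h1, if_pos rfl, hpe]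
      exact h2

lemma tauweak_path {A B : Term} (h : TauWeak A B) :
    ∃ q, 1 ≤ q ∧ ∃ p : ℕ → Term, p 0 = A ∧ p q = B ∧ ∀ l < q, Tau (p l) (p (l+1)) := by
  obtain ⟨C, t, w⟩ := h
  obtain ⟨q, p, hp0, hpe, hpath⟩ := weak_path w
  refine ⟨q + 1, by omega, fun l => Nat.rec A (fun l' _ => p l') l, rfl, by simpa using hpe, ?_⟩
  intro l hl
  cases l with
  | zero => simpa [hp0] using t
  | succ l => exact hpath l (by omega)

/-- Offsets of concatenated paths. -/
def ofs (q : ℕ → ℕ) : ℕ → ℕ := fun m => Nat.rec 0 (fun m' acc => acc + q m') m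

lemma ofs_succ (q : ℕ → ℕ) (m : ℕ) : ofs q (m+1) = ofs q m + q m := rfl

lemma ofs_mono {q : ℕ → ℕ} (hq : ∀ m, 1 ≤ q m) : StrictMono (ofs q) :=
  strictMono_nat_of_lt_succ (fun m => by rw [ofs_succ]; have := hq m; omega)

lemma ofs_ge {q : ℕ → ℕ} (hq : ∀ m, 1 ≤ q m) (m : ℕ) : m ≤ ofs q m := by
  induction m with
  | zero => exact Nat.zero_le _
  | succ m ih => rw [ofs_succ]; have := hq m; omega

/-- Index of the segment containing position `i`. -/
def idx (q : ℕ → ℕ) (i : ℕ) : ℕ := Nat.findGreatest (fun m => ofs q m ≤ i) i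

lemma idx_le {q : ℕ → ℕ} (hq : ∀ m, 1 ≤ q m) (i : ℕ) : ofs q (idx q i) ≤ i :=
  Nat.findGreatest_spec (P := fun m => ofs q m ≤ i) (Nat.zero_le i) (Nat.zero_le i)

lemma idx_lt {q : ℕ → ℕ} (hq : ∀ m, 1 ≤ q m) (i : ℕ) : i < ofs q (idx q i + 1) := by
  by_contra hcon
  push_neg at hcon
  have h1 : idx q i + 1 ≤ i := le_trans (ofs_ge hq _) hcon
  have h2 := Nat.le_findGreatest (P := fun m => ofs q m ≤ i) h1 hcon
  simp only [idx] at h2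
  omega

lemma idx_eq {q : ℕ → ℕ} (hq : ∀ m, 1 ≤ q m) {m i : ℕ} (h1 : ofs q m ≤ i)
    (h2 : i < ofs q (m+1)) : idx q i = m := by
  have hle : m ≤ idx q i := Nat.le_findGreatest (P := fun m => ofs q m ≤ i) (le_trans (ofs_ge hq m) h1) h1
  by_contra hne
  have h3 : m + 1 ≤ idx q i := by omega
  have h4 := (ofs_mono hq).monotone h3
  have h5 := idx_le hq i
  omega

lemma concat (u : ℕ → Term) (hu : ∀ m, TauWeak (u m) (u (m+1))) :
    ∃ h : ℕ → Term, TauSeq h ∧ h 0 = u 0 ∧ ∀ m, ∃ i ≥ m, h i = u m := by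
  choose q hq p hp0 hpe hpath using fun m => tauweak_path (hu m)
  have hidx0 : idx q 0 = 0 := idx_eq hq (Nat.le_refl _) (by rw [ofs_succ]; have := hq 0; omega)
  refine ⟨fun i => p (idx q i) (i - ofs q (idx q i)), ?_, ?_, ?_⟩
  · intro i
    have hMi1 := idx_le hq i
    have hMi2 := idx_lt hq i
    have hlt : i - ofs q (idx q i) < q (idx q i) := by rw [ofs_succ] at hMi2; omega
    have hstep := hpath (idx q i) _ hlt
    show Tau (p (idx q i) (i - ofs q (idx q i))) (p (idx q (i+1)) (i+1 - ofs q (idx q (i+1))))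
    by_cases hc : i + 1 < ofs q (idx q i + 1)
    · have heq : idx q (i+1) = idx q i := idx_eq hq (by omega) hc
      rw [heq]
      have harith : i + 1 - ofs q (idx q i) = i - ofs q (idx q i) + 1 :=
        Nat.succ_sub hMi1
      rw [harith]
      exact hstep
    · have heq1 : i + 1 = ofs q (idx q i + 1) := by omega
      have heq2 : idx q (i+1) = idx q i + 1 := by
        refine idx_eq hq (by omega) ?_
        rw [ofs_succ (q := q) (idx q i + 1)]
        have := hq (idx q i + 1); omega
      have harith2 : i + 1 - ofs q (idx q i + 1) = 0 := by omega
      have harith3 : i - ofs q (idx q i) + 1 = q (idx q i) := by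
        rw [ofs_succ] at heq1; omega
      rw [heq2, harith2, hp0, ← hpe (idx q i), ← harith3]
      exact hstep
  · show p (idx q 0) (0 - ofs q (idx q 0)) = u 0
    rw [hidx0]
    simpa using hp0 0
  · intro m
    refine ⟨ofs q m, ofs_ge hq m, ?_⟩
    show p (idx q (ofs q m)) (ofs q m - ofs q (idx q (ofs q m))) = u m
    have heq : idx q (ofs q m) = m := idx_eq hq (Nat.le_refl _) (ofs_mono hq (by omega))
    rw [heq]
    simpa using hp0 m

end Inert
namespace Inert

/-! ### Codivergence of `Rstar` -/

lemma l1 {R : PRel} (hC : Codivergent R) {X Z : Term} (h : Er R X Z) (g : ℕ → Term)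
    (hg0 : g 0 = Z) (hgs : TauSeq g) :
    ∃ k, 1 ≤ k ∧ ∃ X₁, TauWeak X X₁ ∧ R X₁ (g k) := by
  rcases h with h | h
  · exact (hC X Z h).1 g hg0 hgs
  · exact (hC Z X h).2 g hg0 hgs

lemma build {R : PRel} (hB : Bisim R) (hC : Codivergent R) {g : ℕ → Term} (hg : TauSeq g)
    {X A : Term} {j₀ : ℕ} (hXA : TauWeak X A) (hA : R A (g j₀)) :
    ∃ h, TauSeq h ∧ h 0 = X ∧ ∀ N, ∃ i ≥ N, ∃ j ≥ j₀, R (h i) (g j) := by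
  have step : ∀ (a : Term) (j : ℕ), R a (g j) →
      ∃ a', ∃ j', j < j' ∧ TauWeak a a' ∧ R a' (g j') := by
    intro a j ha
    have := (hC a (g j) ha).1 (fun m => g (j + m)) rfl
      (fun m => by show Tau (g (j + m)) (g (j + (m + 1)))
                   have he : j + (m + 1) = (j + m) + 1 := by omega
                   rw [he]; exact hg (j + m))
    obtain ⟨k, hk, a', tw, hr⟩ := this
    exact ⟨a', j + k, by omega, tw, hr⟩
  let T := Σ' (a : Term) (j : ℕ), R a (g j)
  let F : T → T := fun s =>
    ⟨(step s.1 s.2.1 s.2.2).choose, (step s.1 s.2.1 s.2.2).choose_spec.choose,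
      (step s.1 s.2.1 s.2.2).choose_spec.choose_spec.2.2⟩
  let v : ℕ → T := fun m => F^[m] ⟨A, j₀, hA⟩
  have hvsucc : ∀ m, v (m+1) = F (v m) := fun m => Function.iterate_succ_apply' F m _
  have hlink : ∀ m, TauWeak (v m).1 (v (m+1)).1 := by
    intro m; rw [hvsucc]
    exact (step (v m).1 (v m).2.1 (v m).2.2).choose_spec.choose_spec.2.1
  have hjmono : ∀ m, (v m).2.1 < (v (m+1)).2.1 := by
    intro m; rw [hvsucc]
    exact (step (v m).1 (v m).2.1 (v m).2.2).choose_spec.choose_spec.1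
  have hjge : ∀ m, j₀ ≤ (v m).2.1 := by
    intro m; induction m with
    | zero => exact Nat.le_refl _
    | succ m ih => exact le_of_lt (lt_of_le_of_lt ih (hjmono m))
  let u : ℕ → Term := fun m => Nat.rec X (fun m' _ => (v m').1) m
  have hu : ∀ m, TauWeak (u m) (u (m+1)) := by
    intro m; cases m with
    | zero => exact hXA
    | succ m => exact hlink m
  obtain ⟨h, hhseq, hh0, hcp⟩ := concat u hu
  refine ⟨h, hhseq, hh0, ?_⟩
  intro N
  obtain ⟨i, hiN, hie⟩ := hcp (N+1)
  refine ⟨i, by omega, (v N).2.1, hjge N, ?_⟩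
  rw [hie]
  exact (v N).2.2

lemma codstar {R : PRel} (hB : Bisim R) (hC : Codivergent R) :
    ∀ X Y, Rstar R X Y → ∀ f, f 0 = Y → TauSeq f →
      ∃ h, TauSeq h ∧ h 0 = X ∧
        ∀ N, ∃ i ≥ N, ∃ x' k, WeakTau (h i) x' ∧ 1 ≤ k ∧ Rstar R x' (f k) := by
  intro X Y hXY
  induction hXY using Relation.TransGen.head_induction_on with
  | single h =>
    intro f hf0 hfs
    obtain ⟨k₁, hk₁, A, tw, hr⟩ := l1 hC h f hf0 hfs
    obtain ⟨h', hseq, h0, hcp⟩ := build hB hC hfs tw hr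
    refine ⟨h', hseq, h0, ?_⟩
    intro N
    obtain ⟨i, hiN, j, hj, hr'⟩ := hcp N
    exact ⟨i, hiN, h' i, j, Relation.ReflTransGen.refl, le_trans hk₁ hj, rstar_single hr'⟩
  | @head X Z hXZ hZY ihZ =>
    intro f hf0 hfs
    obtain ⟨h, hseq, h0, hinv⟩ := ihZ f hf0 hfs
    obtain ⟨k', hk', X₁, tw, hr⟩ := l1 hC hXZ h h0 hseq
    obtain ⟨h'', hseq'', h0'', hcp⟩ := build hB hC hseq tw hr
    refine ⟨h'', hseq'', h0'', ?_⟩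
    intro N
    obtain ⟨i, hiN, j, hj, hr''⟩ := hcp N
    obtain ⟨i', hi', x', k, w, hk, rs⟩ := hinv j
    have wjx : WeakTau (h j) x' := weak_trans (tauseq_weak hseq j i' hi') w
    obtain ⟨y, wy, hy⟩ := star hB hr'' wjx
    exact ⟨i, hiN, y, k, wy, hk, rstar_head hy rs⟩

lemma codiv_half {R : PRel} (hB : Bisim R) (hC : Codivergent R) :
    ∀ X Y, Rstar R X Y → ∀ f, f 0 = Y → TauSeq f →
      ∃ k, 1 ≤ k ∧ ∃ X', TauWeak X X' ∧ Rstar R X' (f k) := by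
  intro X Y hXY f hf0 hfs
  obtain ⟨h, hseq, h0, hinv⟩ := codstar hB hC X Y hXY f hf0 hfs
  obtain ⟨i, hi1, x', k, w, hk, rs⟩ := hinv 1
  refine ⟨k, hk, x', ?_, rs⟩
  have t1 : Tau X (h 1) := by rw [← h0]; exact hseq 0
  exact ⟨h 1, t1, weak_trans (tauseq_weak hseq 1 i hi1) w⟩

lemma codiv_rstar {R : PRel} (hB : Bisim R) (hC : Codivergent R) :
    Codivergent (Rstar R) := fun P Q h =>
  ⟨codiv_half hB hC P Q h, codiv_half hB hC Q P (rstar_symm h)⟩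

end Inert
namespace Inert

/-! ### The candidate relation `Srel` and its goodness -/

def Srel (R : PRel) : PRel := fun X Y =>
  IsProc X ∧ IsProc Y ∧ (∃ X', WeakTau X X' ∧ Rstar R X' Y) ∧
    (∃ Y', WeakTau Y Y' ∧ Rstar R Y' X)

lemma srel_symm {R : PRel} {X Y : Term} (h : Srel R X Y) : Srel R Y X :=
  ⟨h.2.1, h.1, h.2.2.2, h.2.2.1⟩

lemma mkS {R : PRel} {X Y : Term} (hX : IsProc X) (hY : IsProc Y) (h : Rstar R X Y) :
    Srel R X Y :=
  ⟨hX, hY, ⟨X, Relation.ReflTransGen.refl, h⟩,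
    ⟨Y, Relation.ReflTransGen.refl, rstar_symm h⟩⟩

section Good

variable {R : PRel} (hOn : OnProc R) (hRefl : ReflProc R) (hEq : Equipollent R)
  (hExt : Extensional R) (hCod : Codivergent R) (hBis : Bisim R)

lemma srel_clause1 (hBis : Bisim R) {X Y : Term} (h : Srel R X Y) :
    ∀ Y', Tau Y Y' →
      (∃ X', WeakTau X X' ∧ Srel R X' Y ∧ Srel R X' Y') ∨
      (∃ X'' X', WeakTau X X'' ∧ Srel R X'' Y ∧ Tau X'' X' ∧ Srel R X' Y') := by
  obtain ⟨pX, pY, ⟨X₀, w, rs⟩, -⟩ := h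
  intro Y' tY
  have pY' : IsProc Y' := closed_tau tY pY
  rcases rstar_clause1 hBis X₀ Y rs Y' tY with ⟨X₁, w₁, r1, r2⟩ | ⟨X₂, X₁, w₂, r1, t, r2⟩
  · have pX₁ : IsProc X₁ := closed_weak (weak_trans w w₁) pX
    exact Or.inl ⟨X₁, weak_trans w w₁, mkS pX₁ pY r1, mkS pX₁ pY' r2⟩
  · have pX₂ : IsProc X₂ := closed_weak (weak_trans w w₂) pX
    have pX₁ : IsProc X₁ := closed_tau t pX₂
    exact Or.inr ⟨X₂, X₁, weak_trans w w₂, mkS pX₂ pY r1, t, mkS pX₁ pY' r2⟩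

lemma srel_codiv_half (hBis : Bisim R) (hCod : Codivergent R) {X Y : Term}
    (h : Srel R X Y) : ∀ g : ℕ → Term, g 0 = Y → TauSeq g →
      ∃ k, 1 ≤ k ∧ ∃ X', TauWeak X X' ∧ Srel R X' (g k) := by
  obtain ⟨pX, pY, ⟨X₀, w, rs⟩, -⟩ := h
  intro g hg0 hgs
  obtain ⟨k, hk, X', tw, rs'⟩ := (codiv_rstar hBis hCod X₀ Y rs).1 g hg0 hgs
  have tw' : TauWeak X X' := weak_tauweak w tw
  refine ⟨k, hk, X', tw', ?_⟩
  exact mkS (closed_weak (tauweak_weak tw') pX)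
    (tauseq_closed hgs (by rw [hg0]; exact pY) k) rs'

lemma good_srel (hG : GoodAbs R) : GoodAbs (Srel R) := by
  obtain ⟨hOn, hRefl, hEq, hExt, hCod, hBis⟩ := hG
  refine ⟨?_, ?_, ?_, ?_, ?_, ?_⟩
  · exact fun P Q h => ⟨h.1, h.2.1⟩
  · exact fun P hP => mkS hP hP (rstar_refl hRefl P hP)
  · rintro P Q ⟨pP, pQ, ⟨X', w, rs⟩, ⟨Y', wY, rsY⟩⟩
    constructor
    · intro hP
      exact weak_obs wY ((rstar_equip hEq Y' P rsY).mpr hP)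
    · intro hQ
      exact weak_obs w ((rstar_equip hEq X' Q rs).mpr hQ)
  · constructor
    · rintro L M P Q ⟨pL, pM, ⟨L', wL, rsL⟩, ⟨M', wM, rsM⟩⟩
        ⟨pP, pQ, ⟨P', wP, rsP⟩, ⟨Q', wQ, rsQ⟩⟩
      refine ⟨closed_par pL pP, closed_par pM pQ, ?_, ?_⟩
      · exact ⟨.par L' P', weak_trans (weak_parL wL) (weak_parR wP),
          (rstar_ext hOn hRefl hExt).1 _ _ _ _ rsL rsP⟩
      · exact ⟨.par M' Q', weak_trans (weak_parL wM) (weak_parR wQ),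
          (rstar_ext hOn hRefl hExt).1 _ _ _ _ rsM rsQ⟩
    · rintro P Q c ⟨pP, pQ, ⟨X', w, rs⟩, ⟨Y', wY, rsY⟩⟩
      refine ⟨closed_res c pP, closed_res c pQ, ?_, ?_⟩
      · exact ⟨.res c X', weak_res c w, (rstar_ext hOn hRefl hExt).2 _ _ c rs⟩
      · exact ⟨.res c Y', weak_res c wY, (rstar_ext hOn hRefl hExt).2 _ _ c rsY⟩
  · exact fun P Q h => ⟨srel_codiv_half hBis hCod h,
      srel_codiv_half hBis hCod (srel_symm h)⟩
  · intro P Q h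
    constructor
    · exact srel_clause1 hBis h
    · intro P' hP'
      rcases srel_clause1 hBis (srel_symm h) P' hP' with
        ⟨Q₁, w, r1, r2⟩ | ⟨Q₂, Q₁, w, r1, t, r2⟩
      · exact Or.inl ⟨Q₁, w, srel_symm r1, srel_symm r2⟩
      · exact Or.inr ⟨Q₂, Q₁, w, srel_symm r1, t, srel_symm r2⟩

end Good

end Inert

/-- if P₀ —τ→ P₁ —τ→ ⋯ —τ→ Pₙ and Pₙ = P₀ (absolute equality),
then all the processes along the sequence are absolutely equal. -/
theorem inert_tau_sequence (n : ℕ) (f : ℕ → Term)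
    (hstep : ∀ i < n, Tau (f i) (f (i + 1)))
    (heq : AbsEq (f n) (f 0)) :
    ∀ i ≤ n, ∀ j ≤ n, AbsEq (f i) (f j) := by
  obtain ⟨R, hG, hR⟩ := heq
  obtain ⟨hOn, hRefl, hEq, hExt, hCod, hBis⟩ := hG
  have proc0 : IsProc (f 0) := (hOn _ _ hR).2
  have procf : ∀ i, i ≤ n → IsProc (f i) := by
    intro i
    induction i with
    | zero => intro _; exact proc0
    | succ i ih =>
      intro hi
      exact Inert.closed_tau (hstep i (by omega)) (ih (by omega))
  have chain : ∀ i j, i ≤ j → j ≤ n → WeakTau (f i) (f j) := by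
    intro i j hij
    induction j, hij using Nat.le_induction with
    | base => intro _; exact Relation.ReflTransGen.refl
    | succ j hij ih =>
      intro hjn
      exact Relation.ReflTransGen.tail (ih (by omega)) (hstep j (by omega))
  have push : ∀ j, j ≤ n → ∃ A, WeakTau (f n) A ∧ Inert.Rstar R A (f j) := by
    intro j
    induction j with
    | zero => intro _; exact ⟨f n, Relation.ReflTransGen.refl, Inert.rstar_single hR⟩
    | succ j ih =>
      intro hj
      obtain ⟨A, w, rs⟩ := ih (by omega)
      rcases Inert.rstar_clause1 hBis A (f j) rs (f (j + 1)) (hstep j (by omega)) with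
        ⟨A', w', _, r2⟩ | ⟨A'', A', w', _, t, r2⟩
      · exact ⟨A', Inert.weak_trans w w', r2⟩
      · exact ⟨A', Inert.weak_trans w (Relation.ReflTransGen.tail w' t), r2⟩
  have key : ∀ i, i ≤ n → ∀ j, j ≤ n → ∃ A, WeakTau (f i) A ∧ Inert.Rstar R A (f j) := by
    intro i hi j hj
    by_cases hij : i ≤ j
    · exact ⟨f j, chain i j hij hj, Inert.rstar_refl hRefl (f j) (procf j hj)⟩
    · obtain ⟨A, w, rs⟩ := push j hj
      exact ⟨A, Inert.weak_trans (chain i n hi (Nat.le_refl n)) w, rs⟩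
  intro i hi j hj
  exact ⟨Inert.Srel R, Inert.good_srel ⟨hOn, hRefl, hEq, hExt, hCod, hBis⟩,
    procf i hi, procf j hj, key i hi j hj, key j hj i hi⟩
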